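/- With θ_r := ∫_{−1}^{1} √(1−t²) P_{2r}(t) dt, one has θ₀ = π/2, θ₁ = −π/16, θ₂ = −π/128, and θ_r > θ₂ (i.e. θ_r > −π/128) for all r > 2. -/

import Mathlib

open Polynomial Real

/-- The `n`-th Legendre polynomial (Rodrigues' formula), normalized so that `P n 1 = 1`. -/
noncomputable def legendre (n : ℕ) : Polynomial ℝ :=
  (((2 : ℝ) ^ n * n.factorial)⁻¹) • (derivative^[n] ((X ^ 2 - 1) ^ n))

/-- `θ r = ∫_{−1}^{1} √(1−t²) P_{2r}(t) dt`. -/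
noncomputable def theta (r : ℕ) : ℝ :=
  ∫ t in (-1 : ℝ)..1, Real.sqrt (1 - t ^ 2) * (legendre (2 * r)).eval t

noncomputable abbrev uP (n : ℕ) : Polynomial ℝ := derivative^[n] ((X ^ 2 - 1) ^ n)

lemma iter_deriv_X_mul (m : ℕ) (p : Polynomial ℝ) :
    derivative^[m+1] (X * p) =
      X * derivative^[m+1] p + ((m:ℝ)+1) • derivative^[m] p := by
  induction m generalizing p with
  | zero => simp [derivative_mul]; ring
  | succ m ih =>
    rw [Function.iterate_succ_apply, derivative_mul, derivative_X, one_mul]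
    rw [show derivative^[m+1] (p + X * derivative p)
        = derivative^[m+1] p + derivative^[m+1] (X * derivative p) by simp]
    rw [ih (derivative p),
        ← Function.iterate_succ_apply derivative (m+1) p,
        ← Function.iterate_succ_apply derivative m p]
    push_cast
    module

lemma iter_deriv_sq_mul (m : ℕ) (p : Polynomial ℝ) :
    derivative^[m+2] ((X ^ 2 - 1) * p) =
      (X ^ 2 - 1) * derivative^[m+2] p
        + (2*((m:ℝ)+2)) • (X * derivative^[m+1] p)
        + (((m:ℝ)+2)*((m:ℝ)+1)) • derivative^[m] p := by
  have h : (X ^ 2 - 1 : Polynomial ℝ) * p = X * (X * p) - p := by ring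
  rw [h, show derivative^[m+2] (X * (X*p) - p)
      = derivative^[m+2] (X * (X*p)) - derivative^[m+2] p by simp]
  rw [show m + 2 = (m+1) + 1 from rfl, iter_deriv_X_mul (m+1) (X*p),
      iter_deriv_X_mul (m+1) p, iter_deriv_X_mul m p]
  push_cast
  simp only [smul_eq_C_mul, map_add, map_mul, map_one, map_ofNat]
  ring

lemma deriv_V (k : ℕ) : derivative ((X^2-1 : Polynomial ℝ)^(k+1))
    = (2*((k:ℝ)+1)) • (X * (X^2-1)^k) := by
  rw [derivative_pow]
  simp only [Nat.add_sub_cancel, derivative_sub, derivative_one, derivative_X_pow]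
  simp only [smul_eq_C_mul]
  push_cast
  simp only [map_add, map_mul, map_one, map_ofNat]
  ring

lemma route_a (m : ℕ) : uP (m+2) = (2*((m:ℝ)+2)) • (X * uP (m+1))
    + (2*((m:ℝ)+2)*((m:ℝ)+1)) • derivative^[m] ((X^2-1 : Polynomial ℝ)^(m+1)) := by
  have h1 : uP (m+2) = derivative^[m+1] (derivative ((X^2-1 : Polynomial ℝ)^(m+2))) := by
    rw [← Function.iterate_succ_apply]
  rw [h1, show m+1+1 = m+2 from rfl, deriv_V (m+1), iterate_derivative_smul,
      iter_deriv_X_mul m ((X^2-1 : Polynomial ℝ)^(m+1))]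
  simp only [smul_eq_C_mul]
  push_cast
  simp only [map_add, map_mul, map_one, map_ofNat]
  ring

lemma route_b (m : ℕ) : uP (m+2) = (X^2-1) * derivative (uP (m+1))
    + (2*((m:ℝ)+2)) • (X * uP (m+1))
    + (((m:ℝ)+2)*((m:ℝ)+1)) • derivative^[m] ((X^2-1 : Polynomial ℝ)^(m+1)) := by
  have h1 : ((X^2-1 : Polynomial ℝ))^(m+2) = (X^2-1) * (X^2-1)^(m+1) := by ring
  have h2 : uP (m+2) = derivative^[m+2] ((X^2-1) * (X^2-1 : Polynomial ℝ)^(m+1)) := by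
    rw [← h1]
  rw [h2, iter_deriv_sq_mul m ((X^2-1 : Polynomial ℝ)^(m+1)),
      ← Function.iterate_succ_apply' derivative (m+1)]

lemma dagger (m : ℕ) : (X^2-1) * derivative (uP (m+1))
    = (((m:ℝ)+2)*((m:ℝ)+1)) • derivative^[m] ((X^2-1 : Polynomial ℝ)^(m+1)) := by
  have ha := route_a m
  have hb := route_b m
  rw [ha] at hb
  simp only [smul_eq_C_mul, map_mul, map_add, map_one, map_ofNat] at hb ⊢
  linear_combination -hb

lemma ddagger (m : ℕ) : uP (m+2) = (2*((m:ℝ)+2)) • (X * uP (m+1))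
    + 2 * ((X^2-1) * derivative (uP (m+1))) := by
  have ha := route_a m
  have hd := dagger m
  simp only [smul_eq_C_mul, map_mul, map_add, map_one, map_ofNat] at ha hd ⊢
  linear_combination ha - 2 * hd

lemma legODE (m : ℕ) : (X^2-1) * derivative (derivative (uP (m+1)))
    + 2 * (X * derivative (uP (m+1))) = (((m:ℝ)+1)*((m:ℝ)+2)) • uP (m+1) := by
  have base : (X^2-1 : Polynomial ℝ) * derivative ((X^2-1)^(m+1))
      = (2*((m:ℝ)+1)) • (X * (X^2-1)^(m+1)) := by
    rw [deriv_V m]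
    simp only [smul_eq_C_mul, map_mul, map_add, map_one, map_ofNat]
    ring
  have h := congrArg (derivative^[m+2]) base
  rw [iter_deriv_sq_mul m (derivative ((X^2-1 : Polynomial ℝ)^(m+1))),
      iterate_derivative_smul, iter_deriv_X_mul (m+1) ((X^2-1 : Polynomial ℝ)^(m+1))] at h
  simp only [← Function.iterate_succ_apply derivative,
      Function.iterate_succ_apply' derivative] at h
  show (X^2-1) * derivative (derivative (derivative^[m+1] ((X^2-1 : Polynomial ℝ)^(m+1))))
    + 2 * (X * derivative (derivative^[m+1] ((X^2-1 : Polynomial ℝ)^(m+1))))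
    = (((m:ℝ)+1)*((m:ℝ)+2)) • derivative^[m+1] ((X^2-1 : Polynomial ℝ)^(m+1))
  simp only [Function.iterate_succ_apply' derivative]
  push_cast at h ⊢
  simp only [smul_eq_C_mul, map_mul, map_add, map_one, map_ofNat] at h ⊢
  linear_combination h

lemma legiii (m : ℕ) : (X^2-1) * derivative (uP (m+2))
    = ((m:ℝ)+2) • (X * uP (m+2)) - (2*((m:ℝ)+2)^2) • uP (m+1) := by
  have hc := ddagger m
  have hd := congrArg derivative hc
  simp only [derivative_add, derivative_smul, derivative_mul, derivative_X, derivative_sub,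
    derivative_one, derivative_X_pow, derivative_ofNat, Nat.cast_ofNat, pow_one, zero_mul,
    mul_one, one_mul, zero_add, add_zero, sub_zero] at hd
  have hODE := legODE m
  simp only [smul_eq_C_mul, map_mul, map_add, map_pow, map_one, map_ofNat] at hc hd hODE ⊢
  push_cast at hc hd hODE ⊢
  linear_combination (X^2-1 : Polynomial ℝ) * hd + (2*(X^2-1) : Polynomial ℝ) * hODE
    - ((C (m:ℝ) + 2)*X) * hc

noncomputable def T (q : Polynomial ℝ) : ℝ :=
  ∫ t in (-1:ℝ)..1, Real.sqrt (1 - t ^ 2) * q.eval t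

lemma contT (q : Polynomial ℝ) : Continuous fun t : ℝ => Real.sqrt (1 - t ^ 2) * q.eval t := by
  fun_prop

lemma key (q : Polynomial ℝ) : T ((1 - X ^ 2) * derivative q) = 3 * T (X * q) := by
  set F : ℝ → ℝ := fun t => (1 - t ^ 2) * (Real.sqrt (1 - t ^ 2) * q.eval t) with hF
  set f : ℝ → ℝ := fun t => Real.sqrt (1 - t ^ 2) * ((1 - X ^ 2) * derivative q).eval t
      - 3 * (Real.sqrt (1 - t ^ 2) * (X * q).eval t) with hf
  have hder : ∀ t ∈ Set.Ioo (-1:ℝ) 1, HasDerivAt F (f t) t := by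
    intro t ht
    have h1 : (0:ℝ) < 1 - t ^ 2 := by nlinarith [ht.1, ht.2]
    have hs0 : Real.sqrt (1 - t ^ 2) ≠ 0 := by positivity
    have hp : HasDerivAt (fun t : ℝ => 1 - t ^ 2) (-(2 * t)) t := by
      simpa using ((hasDerivAt_pow 2 t).const_sub 1)
    have hsq : HasDerivAt (fun t : ℝ => Real.sqrt (1 - t ^ 2))
        (1 / (2 * Real.sqrt (1 - t ^ 2)) * (-(2 * t))) t :=
      (Real.hasDerivAt_sqrt h1.ne').comp t hp
    have hq : HasDerivAt (fun t : ℝ => q.eval t) ((derivative q).eval t) t :=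
      q.hasDerivAt t
    have : HasDerivAt (fun t : ℝ => (1 - t ^ 2) * (Real.sqrt (1 - t ^ 2) * q.eval t))
        (-(2 * t) * (Real.sqrt (1 - t ^ 2) * q.eval t) + (1 - t ^ 2) *
          (1 / (2 * Real.sqrt (1 - t ^ 2)) * -(2 * t) * q.eval t
            + Real.sqrt (1 - t ^ 2) * (derivative q).eval t)) t := hp.mul (hsq.mul hq)
    convert this using 1
    have hss : Real.sqrt (1 - t ^ 2) ^ 2 = 1 - t ^ 2 := Real.sq_sqrt h1.le
    simp only [hf, eval_mul, eval_sub, eval_one, eval_pow, eval_X]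
    field_simp
    linear_combination (-t * q.eval t) * hss
  have hcont : ContinuousOn F (Set.Icc (-1:ℝ) 1) := by fun_prop
  have hint : IntervalIntegrable f MeasureTheory.volume (-1:ℝ) 1 := by
    apply Continuous.intervalIntegrable; fun_prop
  have h0 : ∫ t in (-1:ℝ)..1, f t = F 1 - F (-1) :=
    intervalIntegral.integral_eq_sub_of_hasDerivAt_of_le (by norm_num) hcont hder hint
  have hF1 : F 1 = 0 := by simp [hF]
  have hF2 : F (-1) = 0 := by norm_num [hF]
  rw [hF1, hF2, sub_zero] at h0
  have hsplit : ∫ t in (-1:ℝ)..1, f t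
      = T ((1 - X ^ 2) * derivative q) - 3 * T (X * q) := by
    rw [hf]
    rw [intervalIntegral.integral_sub ((contT _).intervalIntegrable _ _)
      (by apply Continuous.intervalIntegrable; fun_prop)]
    rw [intervalIntegral.integral_const_mul]
    rfl
  linarith [hsplit.symm.trans h0]

lemma T_add (p q : Polynomial ℝ) : T (p + q) = T p + T q := by
  unfold T
  rw [← intervalIntegral.integral_add ((contT p).intervalIntegrable _ _)
    ((contT q).intervalIntegrable _ _)]
  simp [mul_add]

lemma T_sub (p q : Polynomial ℝ) : T (p - q) = T p - T q := by
  unfold T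
  rw [← intervalIntegral.integral_sub ((contT p).intervalIntegrable _ _)
    ((contT q).intervalIntegrable _ _)]
  simp [mul_sub]

lemma T_Cmul (a : ℝ) (p : Polynomial ℝ) : T (C a * p) = a * T p := by
  unfold T
  rw [← intervalIntegral.integral_const_mul]
  simp only [eval_mul, eval_C]
  congr 1; funext t; ring

lemma T_smul (a : ℝ) (p : Polynomial ℝ) : T (a • p) = a * T p := by
  rw [smul_eq_C_mul, T_Cmul]

lemma T_one : T 1 = π / 2 := by
  unfold T
  simpa using integral_sqrt_one_sub_sq

lemma T_X_sq : T (X ^ 2) = π / 8 := by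
  have h := key X
  rw [derivative_X, mul_one, T_sub, T_one, show (X : Polynomial ℝ) * X = X ^ 2 by ring] at h
  linarith

lemma T_neg (p : Polynomial ℝ) : T (-p) = - T p := by
  simpa [T_Cmul] using T_Cmul (-1) p

lemma TE (m : ℕ) : ((m:ℝ)+5) * T (X * uP (m+2)) = 2*((m:ℝ)+2)^2 * T (uP (m+1)) := by
  have h := legiii m
  have h2 : (1 - X ^ 2 : Polynomial ℝ) * derivative (uP (m+2))
      = (2*((m:ℝ)+2)^2) • uP (m+1) - ((m:ℝ)+2) • (X * uP (m+2)) := by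
    simp only [smul_eq_C_mul, map_mul, map_add, map_pow, map_one, map_ofNat] at h ⊢
    linear_combination -h
  have h3 := key (uP (m+2))
  rw [h2, T_sub, T_smul, T_smul] at h3
  linarith

lemma TF (m : ℕ) : T (uP (m+3)) = 2*(m:ℝ) * T (X * uP (m+2)) := by
  have h := congrArg T (ddagger (m+1))
  have hneg : T ((X ^ 2 - 1 : Polynomial ℝ) * derivative (uP (m+2)))
      = - T ((1 - X ^ 2 : Polynomial ℝ) * derivative (uP (m+2))) := by
    rw [show (X ^ 2 - 1 : Polynomial ℝ) * derivative (uP (m+2))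
        = -((1 - X ^ 2) * derivative (uP (m+2))) by ring, T_neg]
  rw [show m+1+2 = m+3 from rfl, show m+1+1 = m+2 from rfl] at h
  rw [T_add, T_smul, show (2 : Polynomial ℝ) * ((X ^ 2 - 1) * derivative (uP (m+2)))
      = C 2 * ((X ^ 2 - 1) * derivative (uP (m+2))) by rw [map_ofNat], T_Cmul,
      hneg, key (uP (m+2))] at h
  push_cast at h
  linarith [h]

lemma trec (m : ℕ) : ((m:ℝ)+5) * T (uP (m+3)) = 4*(m:ℝ)*((m:ℝ)+2)^2 * T (uP (m+1)) := by
  have h1 := TE m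
  have h2 := TF m
  rw [h2]
  nlinarith [h1]

lemma theta_eq (r : ℕ) :
    (2:ℝ)^(2*r) * ((2*r).factorial) * theta r = T (uP (2*r)) := by
  have hpos : (0:ℝ) < (2:ℝ)^(2*r) * ((2*r).factorial) := by positivity
  have : theta r = T ((((2:ℝ)^(2*r) * ((2*r).factorial))⁻¹) • uP (2*r)) := rfl
  rw [this, T_smul]
  field_simp

lemma theta0 : theta 0 = π / 2 := by
  have h := theta_eq 0
  have hu : uP (2*0) = 1 := by
    show derivative^[0] ((X^2-1 : Polynomial ℝ)^0) = 1
    simp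
  rw [hu, T_one] at h
  norm_num at h
  linarith

lemma uP2 : uP 2 = C 12 * X ^ 2 - C 4 := by
  show derivative (derivative ((X^2-1 : Polynomial ℝ)^2)) = _
  rw [show ((X^2-1 : Polynomial ℝ))^2 = X^4 - C 2 * X^2 + 1 by rw [map_ofNat]; ring]
  simp only [derivative_add, derivative_sub, derivative_one, derivative_X_pow,
    derivative_C_mul_X_pow]
  push_cast
  simp only [map_ofNat, map_one, map_mul, map_zero]
  ring

lemma theta1 : theta 1 = -π / 16 := by
  have h := theta_eq 1
  rw [show 2*1 = 2 from rfl, uP2, T_sub, T_Cmul,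
      show (C 4 : Polynomial ℝ) = C 4 * 1 by ring, T_Cmul, T_X_sq, T_one] at h
  norm_num at h
  linarith

lemma theta_rec (s : ℕ) : theta (s+2)
    = ((2*(s:ℝ)+1)*(2*(s:ℝ)+3))/((2*(s:ℝ)+4)*(2*(s:ℝ)+6)) * theta (s+1) := by
  have h := trec (2*s+1)
  have h4 := theta_eq (s+2)
  have h2 := theta_eq (s+1)
  rw [show 2*(s+2) = (2*s+1)+3 by ring] at h4
  rw [show 2*(s+1) = (2*s+1)+1 by ring] at h2
  rw [← h4, ← h2] at h
  push_cast at h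
  have hfac : (((2*s+1+3).factorial : ℝ)) = (2*(s:ℝ)+4)*(2*(s:ℝ)+3)*((2*s+1+1).factorial : ℝ) := by
    rw [show 2*s+1+3 = (2*s+1+2)+1 by ring, Nat.factorial_succ,
        show 2*s+1+2 = (2*s+1+1)+1 by ring, Nat.factorial_succ]
    push_cast
    ring
  have hpow : (2:ℝ)^(2*s+1+3) = 4 * (2:ℝ)^(2*s+1+1) := by
    rw [show 2*s+1+3 = (2*s+1+1)+2 by ring, pow_add]
    ring
  rw [hfac, hpow] at h
  have hA : (0:ℝ) < (2:ℝ)^(2*s+1+1) := by positivity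
  have ha : (0:ℝ) < (((2*s+1+1).factorial : ℝ)) := by positivity
  have hc : ((2*(s:ℝ)+4)*(2*(s:ℝ)+6)) ≠ 0 := by positivity
  rw [div_mul_eq_mul_div, eq_div_iff hc]
  apply mul_left_cancel₀ (a := 4 * (2:ℝ)^(2*s+1+1) * ((2*s+1+1).factorial : ℝ) * (2*(s:ℝ)+3))
    (by positivity)
  linear_combination h

theorem theta_values :
    theta 0 = π / 2 ∧ theta 1 = -π / 16 ∧ theta 2 = -π / 128 ∧
    ∀ r : ℕ, 2 < r → theta r > -π / 128 := by
  have h2 : theta 2 = -π / 128 := by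
    have h := theta_rec 0
    rw [theta1] at h
    norm_num at h
    linarith
  refine ⟨theta0, theta1, h2, ?_⟩
  have key : ∀ k : ℕ, -π/128 < theta (k+3) ∧ theta (k+3) < 0 := by
    intro k
    induction k with
    | zero =>
      have h := theta_rec 1
      rw [h2] at h
      norm_num at h
      rw [h]
      constructor <;> nlinarith [pi_pos]
    | succ n ih =>
      obtain ⟨ih1, ih2⟩ := ih
      have h := theta_rec (n+2)
      have e1 : n+2+1 = n+3 := by omega
      rw [e1] at h
      push_cast at h
      have hr1 : (0:ℝ) < (2*(n:ℝ)+5)*(2*(n:ℝ)+7) := by positivity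
      have hr2 : (2*(n:ℝ)+5)*(2*(n:ℝ)+7) < (2*(n:ℝ)+8)*(2*(n:ℝ)+10) := by nlinarith
      have hd : (0:ℝ) < (2*(n:ℝ)+8)*(2*(n:ℝ)+10) := by positivity
      have hmul : ((2*(n:ℝ)+8)*(2*(n:ℝ)+10)) * theta (n+2+2)
          = ((2*(n:ℝ)+5)*(2*(n:ℝ)+7)) * theta (n+3) := by
        rw [h]
        have hne : ((2*(n:ℝ)+2+4)*(2*(n:ℝ)+2+6)) ≠ 0 := by positivity
        field_simp
        ring
      have hlt0 : theta (n+2+2) < 0 := by nlinarith [hmul, hr1, hd, ih2]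
      have e2 : n+1+3 = n+2+2 := by omega
      rw [e2]
      refine ⟨?_, hlt0⟩
      nlinarith [hmul, hr1, hr2, hd, ih1, ih2, pi_pos,
        mul_lt_mul_of_pos_left ih1 hr1]
  intro r hr
  obtain ⟨k, rfl⟩ : ∃ k, r = k+3 := ⟨r - 3, by omega⟩
  exact (key k).1
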